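/- Let (X, δ) be a complete diversity and let D ⊆ X be a dense subset (with respect to the induced metric) such that the restricted diversity (D, δ) has the extension property. Then (X, δ) has the extension property. (In particular, if a separable diversity has the extension property, then so does its completion.) -/

import Mathlib

open scoped Classical

/-- A diversity on `X`: a real-valued function on finite subsets satisfying
(D1) nonnegativity with `δ A = 0 ↔ |A| ≤ 1`, and (D2) the triangle inequality. -/
structure Diversity (X : Type*) where
  δ : Finset X → ℝ
  nonneg : ∀ A : Finset X, 0 ≤ δ A
  eq_zero_iff : ∀ A : Finset X, δ A = 0 ↔ A.card ≤ 1
  triangle : ∀ A B C : Finset X, B.Nonempty → δ (A ∪ C) ≤ δ (A ∪ B) + δ (B ∪ C)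

/-- An admissible function on a diversity (a one-point extension). -/
structure IsAdmissible {X : Type*} (D : Diversity X) (f : Finset X → ℝ) : Prop where
  empty : f ∅ = 0
  le : ∀ A : Finset X, D.δ A ≤ f A
  tri : ∀ A B C : Finset X, C.Nonempty → f (A ∪ B) ≤ f (A ∪ C) + D.δ (B ∪ C)
  subadd : ∀ A B : Finset X, f (A ∪ B) ≤ f A + f B

/-- Restriction of a diversity to a subset. -/
noncomputable def Diversity.restrict {X : Type*} (D : Diversity X) (S : Set X) : Diversity S where
  δ A := D.δ (A.image Subtype.val)
  nonneg A := D.nonneg _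
  eq_zero_iff A := by
    rw [D.eq_zero_iff, Finset.card_image_of_injective _ Subtype.val_injective]
  triangle A B C hB := by
    have h := D.triangle (A.image Subtype.val) (B.image Subtype.val) (C.image Subtype.val)
      (hB.image _)
    simpa [Finset.image_union] using h

/-- Separability of the induced metric `d a b = δ {a, b}`. -/
def Diversity.SeparableD {X : Type*} (D : Diversity X) : Prop :=
  ∃ s : Set X, s.Countable ∧ ∀ x : X, ∀ ε : ℝ, 0 < ε → ∃ y ∈ s, D.δ {x, y} < ε

/-- Completeness of the induced metric `d a b = δ {a, b}`. -/
def Diversity.CompleteD {X : Type*} (D : Diversity X) : Prop :=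
  ∀ u : ℕ → X, (∀ ε : ℝ, 0 < ε → ∃ N : ℕ, ∀ m ≥ N, ∀ n ≥ N, D.δ {u m, u n} < ε) →
    ∃ x : X, ∀ ε : ℝ, 0 < ε → ∃ N : ℕ, ∀ n ≥ N, D.δ {u n, x} < ε

/-- The diversity `δ̂` on (finite sets of) admissible functions. -/
noncomputable def hatδ {X : Type*} (F : Finset (Finset X → ℝ)) : ℝ :=
  if F.card ≤ 1 then 0
  else sSup { r : ℝ | ∃ j ∈ F, ∃ A : (Finset X → ℝ) → Finset X,
    r = j ((F.erase j).biUnion A) - ∑ i ∈ F.erase j, i (A i) }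

/-- The canonical maximal extension `f_S^X` of an admissible function on `S ⊆ X`. -/
noncomputable def extFun {X : Type*} (D : Diversity X) (S : Set X) (f : Finset S → ℝ)
    (A : Finset X) : ℝ :=
  sInf { r : ℝ | ∃ (B : Finset S) (As : S → Finset X),
    B.biUnion As = A ∧ r = f B + ∑ b ∈ B, D.δ (insert (b : X) (As b)) }

/-- An admissible function is finitely supported if it is the canonical extension
of an admissible function on some finite nonempty `S ⊆ X`. -/
def FinitelySupported {X : Type*} (D : Diversity X) (f : Finset X → ℝ) : Prop :=
  ∃ S : Set X, S.Finite ∧ S.Nonempty ∧ ∃ g : Finset S → ℝ,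
    IsAdmissible (D.restrict S) g ∧ f = extFun D S g

/-- The extension property for a diversity. -/
def Diversity.ExtensionProp {X : Type*} (D : Diversity X) : Prop :=
  ∀ F : Finset X, ∀ f : Finset ((F : Set X)) → ℝ,
    IsAdmissible (D.restrict (F : Set X)) f →
    ∃ x : X, ∀ A : Finset ((F : Set X)), D.δ (insert x (A.image Subtype.val)) = f A

/-- The approximate extension property for a diversity. -/
def Diversity.ApproxExtensionProp {X : Type*} (D : Diversity X) : Prop :=
  ∀ F : Finset X, ∀ f : Finset ((F : Set X)) → ℝ,
    IsAdmissible (D.restrict (F : Set X)) f →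
    ∀ ε : ℝ, 0 < ε →
      ∃ x : X, ∀ A : Finset ((F : Set X)), |D.δ (insert x (A.image Subtype.val)) - f A| ≤ ε

/-- Ultrahomogeneity: isomorphisms between finite subsets extend to automorphisms. -/
def Diversity.Ultrahomogeneous {X : Type*} (D : Diversity X) : Prop :=
  ∀ (A A' : Finset X) (φ : ((A : Set X)) → ((A' : Set X))), Function.Bijective φ →
    (∀ B : Finset ((A : Set X)),
      D.δ (B.image (fun b => (φ b : X))) = D.δ (B.image Subtype.val)) →
    ∃ Φ : X → X, Function.Bijective Φ ∧ (∀ C : Finset X, D.δ (C.image Φ) = D.δ C) ∧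
      ∀ a : ((A : Set X)), Φ a = (φ a : X)
namespace DivAux

variable {X : Type*} (D : Diversity X)

lemma d_empty : D.δ ∅ = 0 := (D.eq_zero_iff ∅).2 (by simp)
lemma d_singleton (x : X) : D.δ {x} = 0 := (D.eq_zero_iff {x}).2 (by simp)

lemma d_mono {A B : Finset X} (h : A ⊆ B) : D.δ A ≤ D.δ B := by
  classical
  have key : ∀ (E A : Finset X), D.δ A ≤ D.δ (A ∪ E) := by
    intro E
    induction E using Finset.induction_on with
    | empty => intro A; simp
    | insert e E' hx ih =>
      intro A
      have h1 : D.δ A ≤ D.δ (A ∪ E') := ih A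
      have h2 : D.δ (A ∪ E') ≤ D.δ ((A ∪ E') ∪ {e}) := by
        have := D.triangle (A ∪ E') {e} ∅ ⟨e, Finset.mem_singleton_self e⟩
        simpa [d_singleton, d_empty] using this
      have h3 : (A ∪ E') ∪ {e} = A ∪ insert e E' := by
        ext a; simp [or_comm, or_assoc, or_left_comm]
      linarith [h3 ▸ h2]
  have := key (B \ A) A
  rwa [Finset.union_sdiff_of_subset h] at this

lemma d_swap (T : Finset X) (x y : X) :
    D.δ (T ∪ {y}) ≤ D.δ (T ∪ {x}) + D.δ {x, y} := by
  have := D.triangle T {x} {y} ⟨x, Finset.mem_singleton_self x⟩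
  simpa using this

lemma d_pair_comm (x y : X) : D.δ {x, y} = D.δ {y, x} := by rw [Finset.pair_comm]

/-- Admissibility of `f` relative to the finite set `G`. -/
structure AdmOn (G : Finset X) (f : Finset X → ℝ) : Prop where
  empty : f ∅ = 0
  le : ∀ A, A ⊆ G → D.δ A ≤ f A
  tri : ∀ A, A ⊆ G → ∀ B, B ⊆ G → ∀ C, C ⊆ G → C.Nonempty →
    f (A ∪ B) ≤ f (A ∪ C) + D.δ (B ∪ C)
  subadd : ∀ A, A ⊆ G → ∀ B, B ⊆ G → f (A ∪ B) ≤ f A + f B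

variable {D}

namespace AdmOn

variable {G : Finset X} {f : Finset X → ℝ}

lemma nonneg (hf : AdmOn D G f) {A : Finset X} (hA : A ⊆ G) : 0 ≤ f A :=
  le_trans (D.nonneg A) (hf.le A hA)

lemma mono (hf : AdmOn D G f) {A B : Finset X} (hAB : A ⊆ B) (hB : B ⊆ G) : f A ≤ f B := by
  classical
  have key : ∀ (E A : Finset X), A ∪ E ⊆ G → f A ≤ f (A ∪ E) := by
    intro E
    induction E using Finset.induction_on with
    | empty => intro A _; simp
    | insert e E' hx ih =>
      intro A hAE
      have hsub : A ∪ E' ⊆ G := by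
        refine Finset.union_subset (fun a ha => hAE ?_) (fun a ha => hAE ?_)
        · exact Finset.mem_union_left _ ha
        · exact Finset.mem_union_right _ (Finset.mem_insert_of_mem ha)
      have he : e ∈ G := hAE (Finset.mem_union_right _ (Finset.mem_insert_self e E'))
      have h1 : f A ≤ f (A ∪ E') := ih A hsub
      have h2 : f ((A ∪ E') ∪ ∅) ≤ f ((A ∪ E') ∪ {e}) + D.δ (∅ ∪ {e}) :=
        hf.tri (A ∪ E') hsub ∅ (by simp) {e} (by simpa using he)
          ⟨e, Finset.mem_singleton_self e⟩
      have h3 : (A ∪ E') ∪ {e} = A ∪ insert e E' := by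
        ext a; simp [or_comm, or_assoc, or_left_comm]
      rw [h3] at h2
      simp only [Finset.union_empty, Finset.empty_union, d_singleton] at h2
      linarith
  have := key (B \ A) A (by rwa [Finset.union_sdiff_of_subset hAB])
  rwa [Finset.union_sdiff_of_subset hAB] at this

end AdmOn

variable (D)

/-- Candidate set for the canonical extension. -/
def extSet (G : Finset X) (f : Finset X → ℝ) (A : Finset X) : Set ℝ :=
  { r | ∃ B, B ⊆ G ∧ ∃ As : X → Finset X, (∀ b ∈ B, As b ⊆ A) ∧ B.biUnion As = A ∧
      r = f B + ∑ b ∈ B, D.δ (insert b (As b)) }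

/-- The canonical extension of an admissible function to all finite sets. -/
noncomputable def extD (G : Finset X) (f : Finset X → ℝ) (A : Finset X) : ℝ :=
  sInf (extSet D G f A)

lemma star_delta (B : Finset X) (As : X → Finset X) :
    ∀ C : Finset X, D.δ (C ∪ B.biUnion As) ≤ D.δ (C ∪ B) + ∑ b ∈ B, D.δ (insert b (As b)) := by
  classical
  induction B using Finset.induction_on with
  | empty => intro C; simp
  | insert b B' hb ih =>
    intro C
    rw [Finset.biUnion_insert, Finset.sum_insert hb]
    set T := B'.biUnion As with hT
    have e1 : C ∪ (As b ∪ T) = (C ∪ T) ∪ As b := by ext a; simp; tauto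
    have e2 : (C ∪ T) ∪ {b} = (C ∪ {b}) ∪ T := by ext a; simp
    have e3 : (C ∪ {b}) ∪ B' = C ∪ insert b B' := by ext a; simp
    have h2 := D.triangle (C ∪ T) {b} (As b) ⟨b, Finset.mem_singleton_self b⟩
    have h3 := ih (C ∪ {b})
    rw [e2] at h2
    rw [e3] at h3
    have hb2 : D.δ ({b} ∪ As b) = D.δ (insert b (As b)) := rfl
    rw [e1]
    linarith

variable {D}

lemma star_f {G : Finset X} {f : Finset X → ℝ} (hf : AdmOn D G f) (B : Finset X)
    (As : X → Finset X) :
    ∀ C : Finset X, B ⊆ G → C ⊆ G → (∀ b ∈ B, As b ⊆ G) →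
      f (C ∪ B.biUnion As) ≤ f (C ∪ B) + ∑ b ∈ B, D.δ (insert b (As b)) := by
  classical
  induction B using Finset.induction_on with
  | empty => intro C _ _ _; simp
  | insert b B' hb ih =>
    intro C hBG hCG hAs
    have hbG : b ∈ G := hBG (Finset.mem_insert_self b B')
    have hB'G : B' ⊆ G := fun x hx => hBG (Finset.mem_insert_of_mem hx)
    have hAs' : ∀ x ∈ B', As x ⊆ G := fun x hx => hAs x (Finset.mem_insert_of_mem hx)
    have hTG : B'.biUnion As ⊆ G := by
      intro a ha
      obtain ⟨x, hx, hax⟩ := Finset.mem_biUnion.1 ha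
      exact hAs' x hx hax
    rw [Finset.biUnion_insert, Finset.sum_insert hb]
    set T := B'.biUnion As with hT
    have e1 : C ∪ (As b ∪ T) = (C ∪ T) ∪ As b := by ext a; simp; tauto
    have e2 : (C ∪ T) ∪ {b} = (C ∪ {b}) ∪ T := by ext a; simp
    have e3 : (C ∪ {b}) ∪ B' = C ∪ insert b B' := by ext a; simp
    have h2 : f ((C ∪ T) ∪ As b) ≤ f ((C ∪ T) ∪ {b}) + D.δ (As b ∪ {b}) :=
      hf.tri (C ∪ T) (Finset.union_subset hCG hTG) (As b)
        (hAs b (Finset.mem_insert_self b B')) {b} (by simpa using hbG)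
        ⟨b, Finset.mem_singleton_self b⟩
    have h3 := ih (C ∪ {b}) hB'G
      (Finset.union_subset hCG (by simpa using hbG)) hAs'
    rw [e2] at h2
    rw [e3] at h3
    have hb2 : D.δ (As b ∪ {b}) = D.δ (insert b (As b)) := by
      rw [Finset.union_comm]; rfl
    rw [e1]
    linarith

variable {G : Finset X} {f : Finset X → ℝ}

lemma extSet_nonempty (hf : AdmOn D G f) (hG : G.Nonempty) (A : Finset X) :
    (extSet D G f A).Nonempty := by
  classical
  rcases Finset.eq_empty_or_nonempty A with rfl | hA
  · exact ⟨f ∅, ∅, by simp, fun _ => ∅, by simp⟩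
  · obtain ⟨b₀, hb₀⟩ := hG
    refine ⟨f {b₀} + ∑ b ∈ ({b₀} : Finset X), D.δ (insert b A), {b₀}, by simpa using hb₀,
      fun _ => A, by simp, by simp, rfl⟩

lemma extSet_lb (hf : AdmOn D G f) (A : Finset X) :
    ∀ r ∈ extSet D G f A, D.δ A ≤ r := by
  rintro r ⟨B, hBG, As, hAs, hUnion, rfl⟩
  have h1 : D.δ (B ∪ A) ≤ D.δ (B ∪ B) + ∑ b ∈ B, D.δ (insert b (As b)) := by
    conv_lhs => rw [← hUnion]
    exact star_delta D B As B
  have h2 : D.δ A ≤ D.δ (B ∪ A) := d_mono D Finset.subset_union_right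
  have h3 : D.δ (B ∪ B) ≤ f B := by rw [Finset.union_self]; exact hf.le B hBG
  linarith

lemma extD_ge (hf : AdmOn D G f) (hG : G.Nonempty) (A : Finset X) :
    D.δ A ≤ extD D G f A :=
  le_csInf (extSet_nonempty hf hG A) (extSet_lb hf A)

lemma extD_le (hf : AdmOn D G f) {A : Finset X} {r : ℝ} (hr : r ∈ extSet D G f A) :
    extD D G f A ≤ r :=
  csInf_le ⟨D.δ A, extSet_lb hf A⟩ hr

lemma extD_eq (hf : AdmOn D G f) {A : Finset X} (hA : A ⊆ G) :
    extD D G f A = f A := by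
  classical
  refine le_antisymm ?_ ?_
  · have hmem : f A + ∑ a ∈ A, D.δ (insert a ({a} : Finset X)) ∈ extSet D G f A := by
      refine ⟨A, hA, fun a => {a}, by simp, by simp, rfl⟩
    have : ∀ a ∈ A, D.δ (insert a ({a} : Finset X)) = 0 := by
      intro a _; rw [Finset.insert_eq_self.2 (Finset.mem_singleton_self a)]
      exact d_singleton D a
    have := extD_le hf hmem
    rwa [Finset.sum_congr rfl ‹∀ a ∈ A, D.δ (insert a ({a} : Finset X)) = 0›,
      Finset.sum_const_zero, add_zero] at this
  · refine le_csInf ⟨_, by exact ⟨A, hA, fun a => {a}, by simp, by simp, rfl⟩⟩ ?_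
    rintro r ⟨B, hBG, As, hAs, hUnion, rfl⟩
    have hAsG : ∀ b ∈ B, As b ⊆ G := fun b hb => (hAs b hb).trans hA
    have h1 : f (B ∪ B.biUnion As) ≤ f (B ∪ B) + ∑ b ∈ B, D.δ (insert b (As b)) :=
      star_f hf B As B hBG hBG hAsG
    rw [hUnion, Finset.union_self] at h1
    have h2 : f A ≤ f (B ∪ A) := hf.mono Finset.subset_union_right
      (Finset.union_subset hBG hA)
    linarith

lemma extD_tri (hf : AdmOn D G f) (hG : G.Nonempty) (A B C : Finset X) (hC : C.Nonempty) :
    extD D G f (A ∪ B) ≤ extD D G f (A ∪ C) + D.δ (B ∪ C) := by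
  classical
  rw [← sub_le_iff_le_add]
  refine le_csInf (extSet_nonempty hf hG (A ∪ C)) ?_
  rintro r ⟨B', hB'G, As, hAs, hUnion, rfl⟩
  rw [sub_le_iff_le_add]
  obtain ⟨c₀, hc₀⟩ := hC
  have hc₀' : c₀ ∈ B'.biUnion As := by rw [hUnion]; exact Finset.mem_union_right _ hc₀
  obtain ⟨b₀, hb₀, hc₀b⟩ := Finset.mem_biUnion.1 hc₀'
  set As' : X → Finset X := fun b =>
    if b = b₀ then (As b ∩ (A ∪ B)) ∪ B else As b ∩ (A ∪ B) with hAs'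
  have hmem : f B' + ∑ b ∈ B', D.δ (insert b (As' b)) ∈ extSet D G f (A ∪ B) := by
    refine ⟨B', hB'G, As', ?_, ?_, rfl⟩
    · intro b hb
      simp only [hAs']
      split_ifs with h
      · exact Finset.union_subset (Finset.inter_subset_right) Finset.subset_union_right
      · exact Finset.inter_subset_right
    · apply Finset.Subset.antisymm
      · intro a ha
        obtain ⟨b, hb, hab⟩ := Finset.mem_biUnion.1 ha
        simp only [hAs'] at hab
        split_ifs at hab with h
        · rcases Finset.mem_union.1 hab with h1 | h1
          · exact (Finset.mem_inter.1 h1).2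
          · exact Finset.mem_union_right _ h1
        · exact (Finset.mem_inter.1 hab).2
      · intro a ha
        rcases Finset.mem_union.1 ha with h1 | h1
        · have : a ∈ B'.biUnion As := by
            rw [hUnion]; exact Finset.mem_union_left _ h1
          obtain ⟨b, hb, hab⟩ := Finset.mem_biUnion.1 this
          refine Finset.mem_biUnion.2 ⟨b, hb, ?_⟩
          have hmem : a ∈ As b ∩ (A ∪ B) :=
            Finset.mem_inter.2 ⟨hab, Finset.mem_union_left _ h1⟩
          simp only [hAs']
          split_ifs with h
          · exact Finset.mem_union_left _ hmem
          · exact hmem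
        · refine Finset.mem_biUnion.2 ⟨b₀, hb₀, ?_⟩
          simp only [hAs', if_pos rfl]
          exact Finset.mem_union_right _ h1
  refine (extD_le hf hmem).trans ?_
  have hsum : ∑ b ∈ B', D.δ (insert b (As' b)) ≤
      (∑ b ∈ B', D.δ (insert b (As b))) + D.δ (B ∪ C) := by
    rw [← Finset.add_sum_erase _ _ hb₀, ← Finset.add_sum_erase _ _ hb₀]
    have hrest : ∑ b ∈ B'.erase b₀, D.δ (insert b (As' b)) ≤
        ∑ b ∈ B'.erase b₀, D.δ (insert b (As b)) := by
      refine Finset.sum_le_sum ?_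
      intro b hb
      have hbne : b ≠ b₀ := Finset.ne_of_mem_erase hb
      simp only [hAs', if_neg hbne]
      exact d_mono D (Finset.insert_subset_insert _ Finset.inter_subset_left)
    have hmain : D.δ (insert b₀ (As' b₀)) ≤ D.δ (insert b₀ (As b₀)) + D.δ (B ∪ C) := by
      simp only [hAs', if_pos rfl]
      set T := As b₀ ∩ (A ∪ B) with hT
      have e1 : insert b₀ (T ∪ B) = insert b₀ T ∪ B := by
        ext a; simp [or_assoc]
      have h2 := D.triangle (insert b₀ T) {c₀} B ⟨c₀, Finset.mem_singleton_self c₀⟩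
      have h3 : D.δ (insert b₀ T ∪ {c₀}) ≤ D.δ (insert b₀ (As b₀)) := by
        refine d_mono D ?_
        intro a ha
        rcases Finset.mem_union.1 ha with h1 | h1
        · rcases Finset.mem_insert.1 h1 with h4 | h4
          · exact h4 ▸ Finset.mem_insert_self _ _
          · exact Finset.mem_insert_of_mem (Finset.mem_of_mem_inter_left h4)
        · rw [Finset.mem_singleton.1 h1]
          exact Finset.mem_insert_of_mem hc₀b
      have h4 : D.δ ({c₀} ∪ B) ≤ D.δ (B ∪ C) := by
        refine d_mono D ?_
        intro a ha
        rcases Finset.mem_union.1 ha with h1 | h1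
        · rw [Finset.mem_singleton.1 h1]; exact Finset.mem_union_right _ hc₀
        · exact Finset.mem_union_left _ h1
      rw [e1]
      linarith
    linarith
  linarith

lemma extD_subadd (hf : AdmOn D G f) (hG : G.Nonempty) (A B : Finset X) :
    extD D G f (A ∪ B) ≤ extD D G f A + extD D G f B := by
  classical
  rw [← sub_le_iff_le_add]
  refine le_csInf (extSet_nonempty hf hG A) ?_
  rintro r₁ ⟨B₁, hB₁G, As₁, hAs₁, hUnion₁, rfl⟩
  rw [sub_le_iff_le_add, ← sub_le_iff_le_add']
  refine le_csInf (extSet_nonempty hf hG B) ?_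
  rintro r₂ ⟨B₂, hB₂G, As₂, hAs₂, hUnion₂, rfl⟩
  rw [sub_le_iff_le_add']
  set As : X → Finset X := fun b =>
    (if b ∈ B₁ then As₁ b else ∅) ∪ (if b ∈ B₂ then As₂ b else ∅) with hAsdef
  have hmem : f (B₁ ∪ B₂) + ∑ b ∈ B₁ ∪ B₂, D.δ (insert b (As b)) ∈ extSet D G f (A ∪ B) := by
    refine ⟨B₁ ∪ B₂, Finset.union_subset hB₁G hB₂G, As, ?_, ?_, rfl⟩
    · intro b hb
      simp only [hAsdef]
      refine Finset.union_subset ?_ ?_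
      · split_ifs with h
        · exact (hAs₁ b h).trans Finset.subset_union_left
        · simp
      · split_ifs with h
        · exact (hAs₂ b h).trans Finset.subset_union_right
        · simp
    · apply Finset.Subset.antisymm
      · intro a ha
        obtain ⟨b, hb, hab⟩ := Finset.mem_biUnion.1 ha
        simp only [hAsdef] at hab
        rcases Finset.mem_union.1 hab with h1 | h1
        · split_ifs at h1 with h
          · exact Finset.mem_union_left _ (hAs₁ b h h1)
          · simp at h1
        · split_ifs at h1 with h
          · exact Finset.mem_union_right _ (hAs₂ b h h1)
          · simp at h1
      · intro a ha
        rcases Finset.mem_union.1 ha with h1 | h1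
        · have hmem1 : a ∈ B₁.biUnion As₁ := by rw [hUnion₁]; exact h1
          obtain ⟨b, hb, hab⟩ := Finset.mem_biUnion.1 hmem1
          refine Finset.mem_biUnion.2 ⟨b, Finset.mem_union_left _ hb, ?_⟩
          simp only [hAsdef]
          exact Finset.mem_union_left _ (by rw [if_pos hb]; exact hab)
        · have hmem2 : a ∈ B₂.biUnion As₂ := by rw [hUnion₂]; exact h1
          obtain ⟨b, hb, hab⟩ := Finset.mem_biUnion.1 hmem2
          refine Finset.mem_biUnion.2 ⟨b, Finset.mem_union_right _ hb, ?_⟩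
          simp only [hAsdef]
          exact Finset.mem_union_right _ (by rw [if_pos hb]; exact hab)
  refine (extD_le hf hmem).trans ?_
  have hfB : f (B₁ ∪ B₂) ≤ f B₁ + f B₂ := hf.subadd B₁ hB₁G B₂ hB₂G
  have hsum : ∑ b ∈ B₁ ∪ B₂, D.δ (insert b (As b)) ≤
      (∑ b ∈ B₁, D.δ (insert b (As₁ b))) + ∑ b ∈ B₂, D.δ (insert b (As₂ b)) := by
    set g₁ : X → ℝ := fun b => if b ∈ B₁ then D.δ (insert b (As₁ b)) else 0 with hg₁
    set g₂ : X → ℝ := fun b => if b ∈ B₂ then D.δ (insert b (As₂ b)) else 0 with hg₂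
    have hpt : ∀ b ∈ B₁ ∪ B₂, D.δ (insert b (As b)) ≤ g₁ b + g₂ b := by
      intro b hb
      simp only [hAsdef, hg₁, hg₂]
      by_cases h1 : b ∈ B₁
      · by_cases h2 : b ∈ B₂
        · rw [if_pos h1, if_pos h2, if_pos h1, if_pos h2]
          have e1 : insert b (As₁ b ∪ As₂ b) = insert b (As₁ b) ∪ As₂ b := by
            ext a; simp [or_assoc]
          have h3 := D.triangle (insert b (As₁ b)) {b} (As₂ b)
            ⟨b, Finset.mem_singleton_self b⟩
          have e2 : insert b (As₁ b) ∪ {b} = insert b (As₁ b) := by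
            ext a; simp
          have e3 : D.δ ({b} ∪ As₂ b) = D.δ (insert b (As₂ b)) := rfl
          rw [e2, e3] at h3
          rw [e1]
          linarith
        · rw [if_pos h1, if_neg h2, if_pos h1, if_neg h2]; simp
      · have h2 : b ∈ B₂ := by
          rcases Finset.mem_union.1 hb with h | h
          · exact absurd h h1
          · exact h
        rw [if_neg h1, if_pos h2, if_neg h1, if_pos h2]; simp
    have h4 : ∑ b ∈ B₁ ∪ B₂, D.δ (insert b (As b)) ≤ ∑ b ∈ B₁ ∪ B₂, (g₁ b + g₂ b) :=
      Finset.sum_le_sum hpt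
    have h5 : ∑ b ∈ B₁ ∪ B₂, (g₁ b + g₂ b) =
        (∑ b ∈ B₁ ∪ B₂, g₁ b) + ∑ b ∈ B₁ ∪ B₂, g₂ b := Finset.sum_add_distrib
    have h6 : ∑ b ∈ B₁ ∪ B₂, g₁ b = ∑ b ∈ B₁, g₁ b := by
      refine (Finset.sum_subset Finset.subset_union_left ?_).symm
      intro x _ hx; simp only [hg₁, if_neg hx]
    have h7 : ∑ b ∈ B₁ ∪ B₂, g₂ b = ∑ b ∈ B₂, g₂ b := by
      refine (Finset.sum_subset Finset.subset_union_right ?_).symm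
      intro x _ hx; simp only [hg₂, if_neg hx]
    have h8 : ∑ b ∈ B₁, g₁ b = ∑ b ∈ B₁, D.δ (insert b (As₁ b)) :=
      Finset.sum_congr rfl fun x hx => by simp only [hg₁, if_pos hx]
    have h9 : ∑ b ∈ B₂, g₂ b = ∑ b ∈ B₂, D.δ (insert b (As₂ b)) :=
      Finset.sum_congr rfl fun x hx => by simp only [hg₂, if_pos hx]
    linarith
  linarith

section Amalgam

variable (D) (G : Finset X) (f : Finset X → ℝ) (z : X)

/-- The value of the minimal one-point amalgam on `E ∪ {z}`. -/
noncomputable def Mf (E : Finset X) : ℝ :=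
  G.powerset.sup' ⟨∅, Finset.empty_mem_powerset G⟩ fun B =>
    max (D.δ (insert z (E ∪ B)) - f B) (f (E ∪ B) - D.δ (insert z B))

/-- The minimal one-point amalgam of `f` with a new point `z`. -/
noncomputable def amalg : Finset X → ℝ := fun A =>
  if z ∈ A then Mf D G f z (A.erase z) else f A

variable {D G f z}

lemma Mf_t1 {B : Finset X} (hB : B ⊆ G) (E : Finset X) :
    D.δ (insert z (E ∪ B)) - f B ≤ Mf D G f z E := by
  refine le_trans (le_max_left _ (f (E ∪ B) - D.δ (insert z B))) ?_
  exact Finset.le_sup' (fun B => max (D.δ (insert z (E ∪ B)) - f B)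
    (f (E ∪ B) - D.δ (insert z B))) (Finset.mem_powerset.2 hB)

lemma Mf_t2 {B : Finset X} (hB : B ⊆ G) (E : Finset X) :
    f (E ∪ B) - D.δ (insert z B) ≤ Mf D G f z E := by
  refine le_trans (le_max_right (D.δ (insert z (E ∪ B)) - f B) _) ?_
  exact Finset.le_sup' (fun B => max (D.δ (insert z (E ∪ B)) - f B)
    (f (E ∪ B) - D.δ (insert z B))) (Finset.mem_powerset.2 hB)

lemma Mf_le {E : Finset X} {x : ℝ}
    (h1 : ∀ B, B ⊆ G → D.δ (insert z (E ∪ B)) - f B ≤ x)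
    (h2 : ∀ B, B ⊆ G → f (E ∪ B) - D.δ (insert z B) ≤ x) :
    Mf D G f z E ≤ x :=
  Finset.sup'_le _ _ fun B hB =>
    max_le (h1 B (Finset.mem_powerset.1 hB)) (h2 B (Finset.mem_powerset.1 hB))

lemma Mf_ge_delta (hf : AdmOn D G f) (E : Finset X) :
    D.δ (insert z E) ≤ Mf D G f z E := by
  have := Mf_t1 (Finset.empty_subset G) E (D := D) (f := f) (z := z)
  simpa [hf.empty] using this

lemma Mf_ge_f (hf : AdmOn D G f) (E : Finset X) : f E ≤ Mf D G f z E := by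
  have := Mf_t2 (Finset.empty_subset G) E (D := D) (f := f) (z := z)
  simpa [hf.empty, d_singleton] using this

lemma Mf_le_approx (hf : AdmOn D G f) {ε : ℝ} (hε : 0 ≤ ε)
    (happ : ∀ A, A ⊆ G → |D.δ (insert z A) - f A| ≤ ε) {E : Finset X} (hE : E ⊆ G) :
    Mf D G f z E ≤ f E + ε := by
  refine Mf_le ?_ ?_
  · intro B hB
    have h1 : D.δ (insert z (E ∪ B)) ≤ f (E ∪ B) + ε := by
      have := (abs_le.1 (happ (E ∪ B) (Finset.union_subset hE hB))).2
      linarith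
    have h2 : f (E ∪ B) ≤ f E + f B := hf.subadd E hE B hB
    linarith
  · intro B hB
    have h1 : f B - ε ≤ D.δ (insert z B) := by
      have := (abs_le.1 (happ B hB)).1
      have e : insert z (∅ ∪ B) = insert z B := by rw [Finset.empty_union]
      linarith [this]
    have h2 : f (E ∪ B) ≤ f E + f B := hf.subadd E hE B hB
    linarith

lemma Mf_empty_le (hf : AdmOn D G f) {ε : ℝ} (hε : 0 ≤ ε)
    (happ : ∀ A, A ⊆ G → |D.δ (insert z A) - f A| ≤ ε) :
    Mf D G f z ∅ ≤ ε := by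
  have := Mf_le_approx hf hε happ (Finset.empty_subset G)
  rwa [hf.empty, zero_add] at this

lemma Mf_union_plain (hf : AdmOn D G f) {E Q : Finset X} (hE : E ⊆ G) (hQ : Q ⊆ G) :
    Mf D G f z (E ∪ Q) ≤ Mf D G f z E + f Q := by
  refine Mf_le ?_ ?_
  · intro B' hB'
    have h1 := Mf_t1 (Finset.union_subset hQ hB') E (D := D) (f := f) (z := z)
    have h2 := hf.subadd Q hQ B' hB'
    have e : E ∪ (Q ∪ B') = (E ∪ Q) ∪ B' := by ext a; simp [or_assoc]
    rw [e] at h1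
    linarith
  · intro B' hB'
    have h1 := Mf_t2 hB' E (D := D) (f := f) (z := z)
    have h2 := hf.subadd (E ∪ B') (Finset.union_subset hE hB') Q hQ
    have e : (E ∪ B') ∪ Q = (E ∪ Q) ∪ B' := by ext a; simp; tauto
    rw [e] at h2
    linarith

lemma Mf_union_M (hf : AdmOn D G f) {E Q : Finset X} (hE : E ⊆ G) (hQ : Q ⊆ G) :
    Mf D G f z (E ∪ Q) ≤ Mf D G f z E + Mf D G f z Q := by
  refine Mf_le ?_ ?_
  · intro B' hB'
    have h1 := D.triangle E {z} (Q ∪ B' ∪ {z}) ⟨z, Finset.mem_singleton_self z⟩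
    have e1 : E ∪ (Q ∪ B' ∪ {z}) = insert z ((E ∪ Q) ∪ B') := by
      ext a; simp
    have e2 : E ∪ {z} = insert z E := by ext a; simp
    have e3 : {z} ∪ (Q ∪ B' ∪ {z}) = insert z (Q ∪ B') := by ext a; simp
    rw [e1, e2, e3] at h1
    have h2 := Mf_ge_delta hf E (z := z)
    have h3 := Mf_t1 hB' Q (D := D) (f := f) (z := z)
    linarith
  · intro B' hB'
    have h1 := Mf_t2 (Finset.union_subset hQ hB') E (D := D) (f := f) (z := z)
    have h2 := D.triangle Q {z} (B' ∪ {z}) ⟨z, Finset.mem_singleton_self z⟩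
    have e1 : Q ∪ (B' ∪ {z}) = insert z (Q ∪ B') := by ext a; simp
    have e2 : Q ∪ {z} = insert z Q := by ext a; simp
    have e3 : {z} ∪ (B' ∪ {z}) = insert z B' := by ext a; simp
    rw [e1, e2, e3] at h2
    have h3 := Mf_ge_delta hf Q (z := z)
    have e4 : E ∪ (Q ∪ B') = (E ∪ Q) ∪ B' := by ext a; simp [or_assoc]
    rw [e4] at h1
    linarith

lemma subset_of_not_mem_insert {A : Finset X} (hA : A ⊆ insert z G) (h : z ∉ A) :
    A ⊆ G := by
  intro a ha
  rcases Finset.mem_insert.1 (hA ha) with h1 | h1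
  · exact absurd (h1 ▸ ha) h
  · exact h1

lemma erase_subset_of_insert {A : Finset X} (hA : A ⊆ insert z G) :
    A.erase z ⊆ G := by
  intro a ha
  rcases Finset.mem_erase.1 ha with ⟨hne, haA⟩
  rcases Finset.mem_insert.1 (hA haA) with h1 | h1
  · exact absurd h1 hne
  · exact h1

lemma amalg_of_mem {A : Finset X} (h : z ∈ A) :
    amalg D G f z A = Mf D G f z (A.erase z) := by simp [amalg, h]

lemma amalg_of_not_mem {A : Finset X} (h : z ∉ A) :
    amalg D G f z A = f A := by simp [amalg, h]

lemma amalg_adm (hf : AdmOn D G f) : AdmOn D (insert z G) (amalg D G f z) := by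
  classical
  constructor
  · simp [amalg, hf.empty]
  · -- le
    intro A hA
    by_cases hzA : z ∈ A
    · rw [amalg_of_mem hzA]
      have := Mf_ge_delta hf (A.erase z) (z := z)
      rwa [Finset.insert_erase hzA] at this
    · rw [amalg_of_not_mem hzA]
      exact hf.le A (subset_of_not_mem_insert hA hzA)
  · -- tri
    intro A hA B hB C hC hCne
    by_cases hzAB : z ∈ A ∪ B
    · by_cases hzAC : z ∈ A ∪ C
      · -- T3
        rw [amalg_of_mem hzAB, amalg_of_mem hzAC]
        have hA₀G : A.erase z ⊆ G := erase_subset_of_insert hA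
        have hB₀G : B.erase z ⊆ G := erase_subset_of_insert hB
        have hC₀G : C.erase z ⊆ G := erase_subset_of_insert hC
        have eL : (A ∪ B).erase z = A.erase z ∪ B.erase z := by
          ext a; by_cases haz : a = z <;> simp [haz]
        have eR : (A ∪ C).erase z = A.erase z ∪ C.erase z := by
          ext a; by_cases haz : a = z <;> simp [haz]
        rw [eL, eR]
        refine Mf_le ?_ ?_
        · -- t1
          intro B' hB'
          by_cases hzBC : z ∈ B ∪ C
          · have h1 := D.triangle (A.erase z ∪ B') (C.erase z ∪ {z}) (B.erase z ∪ {z})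
              ⟨z, by simp⟩
            have e1 : (A.erase z ∪ B') ∪ (B.erase z ∪ {z}) =
                insert z ((A.erase z ∪ B.erase z) ∪ B') := by
              ext a; by_cases haz : a = z <;> simp [haz] <;> tauto
            have e2 : (A.erase z ∪ B') ∪ (C.erase z ∪ {z}) =
                insert z ((A.erase z ∪ C.erase z) ∪ B') := by
              ext a; by_cases haz : a = z <;> simp [haz] <;> tauto
            rw [e1, e2] at h1
            have h2 := Mf_t1 hB' (A.erase z ∪ C.erase z) (D := D) (f := f) (z := z)
            have h3 : D.δ ((C.erase z ∪ {z}) ∪ (B.erase z ∪ {z})) ≤ D.δ (B ∪ C) := by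
              refine d_mono D ?_
              intro a ha
              simp only [Finset.mem_union, Finset.mem_singleton, Finset.mem_erase] at ha ⊢
              rcases ha with (⟨_, h⟩ | h) | (⟨_, h⟩ | h)
              · tauto
              · subst h; simpa using hzBC
              · tauto
              · subst h; simpa using hzBC
            linarith
          · -- z ∈ A, B C plain
            have hzB : z ∉ B := fun h => hzBC (Finset.mem_union_left _ h)
            have hzC : z ∉ C := fun h => hzBC (Finset.mem_union_right _ h)
            have h1 := D.triangle (insert z (A.erase z ∪ B')) C B hCne
            have e1 : insert z (A.erase z ∪ B') ∪ B =
                insert z ((A.erase z ∪ B.erase z) ∪ B') := by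
              ext a; by_cases haz : a = z <;> simp [haz, hzB] <;> tauto
            have e2 : insert z (A.erase z ∪ B') ∪ C =
                insert z ((A.erase z ∪ C.erase z) ∪ B') := by
              ext a; by_cases haz : a = z <;> simp [haz, hzC] <;> tauto
            rw [e1, e2] at h1
            have h2 := Mf_t1 hB' (A.erase z ∪ C.erase z) (D := D) (f := f) (z := z)
            have h3 : D.δ (C ∪ B) = D.δ (B ∪ C) := by rw [Finset.union_comm]
            linarith
        · -- t2
          intro B' hB'
          by_cases hC₀ne : (C.erase z).Nonempty
          · have h1 := hf.tri (A.erase z ∪ B') (Finset.union_subset hA₀G hB')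
              (B.erase z) hB₀G (C.erase z) hC₀G hC₀ne
            have e1 : (A.erase z ∪ B') ∪ B.erase z = (A.erase z ∪ B.erase z) ∪ B' := by
              ext a; simp; tauto
            have e2 : (A.erase z ∪ B') ∪ C.erase z = (A.erase z ∪ C.erase z) ∪ B' := by
              ext a; simp; tauto
            rw [e1, e2] at h1
            have h2 := Mf_t2 hB' (A.erase z ∪ C.erase z) (D := D) (f := f) (z := z)
            have h3 : D.δ (B.erase z ∪ C.erase z) ≤ D.δ (B ∪ C) := by
              refine d_mono D ?_
              intro a ha
              rcases Finset.mem_union.1 ha with h | h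
              · exact Finset.mem_union_left _ (Finset.mem_of_mem_erase h)
              · exact Finset.mem_union_right _ (Finset.mem_of_mem_erase h)
            linarith
          · -- C.erase z = ∅, so z ∈ C
            have hC₀e : C.erase z = ∅ := Finset.not_nonempty_iff_eq_empty.1 hC₀ne
            have hzC : z ∈ C := by
              obtain ⟨c, hc⟩ := hCne
              by_cases hcz : c = z
              · exact hcz ▸ hc
              · exact absurd (Finset.mem_erase.2 ⟨hcz, hc⟩) (by simp [hC₀e])
            have h1 := Mf_t2 (Finset.union_subset hB₀G hB')
              (A.erase z ∪ C.erase z) (D := D) (f := f) (z := z)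
            have e1 : (A.erase z ∪ C.erase z) ∪ (B.erase z ∪ B') =
                (A.erase z ∪ B.erase z) ∪ B' := by
              rw [hC₀e]; ext a; simp [or_assoc, or_comm, or_left_comm]
            rw [e1] at h1
            have h2 := D.triangle (B.erase z) {z} (B' ∪ {z}) ⟨z, by simp⟩
            have e2 : B.erase z ∪ (B' ∪ {z}) = insert z (B.erase z ∪ B') := by
              ext a; by_cases haz : a = z <;> simp [haz] <;> tauto
            have e3 : B.erase z ∪ {z} = insert z (B.erase z) := by
              ext a; by_cases haz : a = z <;> simp [haz]
            have e4 : ({z} : Finset X) ∪ (B' ∪ {z}) = insert z B' := by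
              ext a; by_cases haz : a = z <;> simp [haz]
            rw [e2, e3, e4] at h2
            have h3 : D.δ (insert z (B.erase z)) ≤ D.δ (B ∪ C) := by
              refine d_mono D ?_
              intro a ha
              rcases Finset.mem_insert.1 ha with h | h
              · rw [h]; exact Finset.mem_union_right _ hzC
              · exact Finset.mem_union_left _ (Finset.mem_of_mem_erase h)
            linarith
      · -- T2 : z ∈ A ∪ B, z ∉ A ∪ C
        have hzA : z ∉ A := fun h => hzAC (Finset.mem_union_left _ h)
        have hzC : z ∉ C := fun h => hzAC (Finset.mem_union_right _ h)
        have hzB : z ∈ B := by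
          rcases Finset.mem_union.1 hzAB with h | h
          · exact absurd h hzA
          · exact h
        have hAG : A ⊆ G := subset_of_not_mem_insert hA hzA
        have hCG : C ⊆ G := subset_of_not_mem_insert hC hzC
        have hB₀G : B.erase z ⊆ G := erase_subset_of_insert hB
        rw [amalg_of_mem hzAB, amalg_of_not_mem hzAC]
        have eL : (A ∪ B).erase z = A ∪ B.erase z := by
          ext a; by_cases haz : a = z <;> simp [haz, hzA]
        rw [eL]
        refine Mf_le ?_ ?_
        · intro B' hB'
          have h1 := D.triangle (A ∪ B') C B hCne
          have e1 : (A ∪ B') ∪ B = insert z ((A ∪ B.erase z) ∪ B') := by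
            ext a; by_cases haz : a = z <;> simp [haz, hzB] <;> tauto
          rw [e1] at h1
          have h2 : D.δ ((A ∪ B') ∪ C) ≤ f ((A ∪ C) ∪ B') := by
            have e2 : (A ∪ B') ∪ C = (A ∪ C) ∪ B' := by ext a; simp; tauto
            rw [e2]
            exact hf.le _ (Finset.union_subset (Finset.union_subset hAG hCG) hB')
          have h3 := hf.subadd (A ∪ C) (Finset.union_subset hAG hCG) B' hB'
          have h4 : D.δ (C ∪ B) = D.δ (B ∪ C) := by rw [Finset.union_comm]
          linarith
        · intro B' hB'
          have h1 := hf.tri A hAG (B.erase z ∪ B') (Finset.union_subset hB₀G hB') C hCG hCne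
          have h2 := D.triangle (B.erase z ∪ C) {z} B' ⟨z, by simp⟩
          have e1 : (B.erase z ∪ C) ∪ {z} = B ∪ C := by
            ext a; by_cases haz : a = z <;> simp [haz, hzB] <;> tauto
          have e2 : ({z} : Finset X) ∪ B' = insert z B' := rfl
          have e3 : (B.erase z ∪ B') ∪ C = (B.erase z ∪ C) ∪ B' := by
            ext a; simp; tauto
          have e4 : A ∪ (B.erase z ∪ B') = (A ∪ B.erase z) ∪ B' := by
            ext a; simp [or_assoc]
          rw [e1, e2] at h2
          rw [e3, e4] at h1
          linarith
    · -- z ∉ A ∪ B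
      have hzA : z ∉ A := fun h => hzAB (Finset.mem_union_left _ h)
      have hzB : z ∉ B := fun h => hzAB (Finset.mem_union_right _ h)
      have hAG : A ⊆ G := subset_of_not_mem_insert hA hzA
      have hBG : B ⊆ G := subset_of_not_mem_insert hB hzB
      by_cases hzAC : z ∈ A ∪ C
      · -- T1 : z ∈ C
        have hzC : z ∈ C := by
          rcases Finset.mem_union.1 hzAC with h | h
          · exact absurd h hzA
          · exact h
        rw [amalg_of_not_mem hzAB, amalg_of_mem hzAC]
        have hC₀G : C.erase z ⊆ G := erase_subset_of_insert hC
        have eR : (A ∪ C).erase z = A ∪ C.erase z := by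
          ext a; by_cases haz : a = z <;> simp [haz, hzA]
        rw [eR]
        have h1 := Mf_t2 hBG (A ∪ C.erase z) (D := D) (f := f) (z := z)
        have h2 : f (A ∪ B) ≤ f ((A ∪ C.erase z) ∪ B) := by
          refine hf.mono ?_ ?_
          · intro a ha
            rcases Finset.mem_union.1 ha with h | h
            · exact Finset.mem_union_left _ (Finset.mem_union_left _ h)
            · exact Finset.mem_union_right _ h
          · exact Finset.union_subset (Finset.union_subset hAG hC₀G) hBG
        have h3 : D.δ (insert z B) ≤ D.δ (B ∪ C) := by
          refine d_mono D ?_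
          intro a ha
          rcases Finset.mem_insert.1 ha with h | h
          · rw [h]; exact Finset.mem_union_right _ hzC
          · exact Finset.mem_union_left _ h
        linarith
      · -- T0
        have hzC : z ∉ C := fun h => hzAC (Finset.mem_union_right _ h)
        have hCG : C ⊆ G := subset_of_not_mem_insert hC hzC
        rw [amalg_of_not_mem hzAB, amalg_of_not_mem hzAC]
        exact hf.tri A hAG B hBG C hCG hCne
  · -- subadd
    intro A hA B hB
    by_cases hzA : z ∈ A
    · by_cases hzB : z ∈ B
      · rw [amalg_of_mem (Finset.mem_union_left _ hzA), amalg_of_mem hzA,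
          amalg_of_mem hzB]
        have e : (A ∪ B).erase z = A.erase z ∪ B.erase z := by
          ext a; by_cases haz : a = z <;> simp [haz]
        rw [e]
        exact Mf_union_M hf (erase_subset_of_insert hA) (erase_subset_of_insert hB)
      · rw [amalg_of_mem (Finset.mem_union_left _ hzA), amalg_of_mem hzA,
          amalg_of_not_mem hzB]
        have hBG : B ⊆ G := subset_of_not_mem_insert hB hzB
        have e : (A ∪ B).erase z = A.erase z ∪ B := by
          ext a; by_cases haz : a = z <;> simp [haz, hzB]
        rw [e]
        exact Mf_union_plain hf (erase_subset_of_insert hA) hBG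
    · by_cases hzB : z ∈ B
      · rw [amalg_of_mem (Finset.mem_union_right _ hzB), amalg_of_not_mem hzA,
          amalg_of_mem hzB]
        have hAG : A ⊆ G := subset_of_not_mem_insert hA hzA
        have e : (A ∪ B).erase z = B.erase z ∪ A := by
          ext a; by_cases haz : a = z <;> simp [haz, hzA] <;> tauto
        rw [e]
        have := Mf_union_plain hf (erase_subset_of_insert hB) hAG (z := z)
        linarith
      · have hzAB : z ∉ A ∪ B := by
          intro h
          rcases Finset.mem_union.1 h with h1 | h1
          · exact hzA h1
          · exact hzB h1
        rw [amalg_of_not_mem hzAB, amalg_of_not_mem hzA, amalg_of_not_mem hzB]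
        exact hf.subadd A (subset_of_not_mem_insert hA hzA) B (subset_of_not_mem_insert hB hzB)

end Amalgam

section Swap

lemma union_insert_eq (c : X) (U T : Finset X) : U ∪ insert c T = (U ∪ T) ∪ {c} := by
  ext b; simp

lemma union_swap_eq (c : X) (U T : Finset X) : (U ∪ T) ∪ {c} = (U ∪ {c}) ∪ T := by
  ext b; simp

lemma swap_sum (g : Finset X → ℝ)
    (hswap : ∀ (T : Finset X) (x y : X), g (T ∪ {y}) ≤ g (T ∪ {x}) + D.δ {x, y})
    (φ : X → X) :
    ∀ (A B : Finset X), g (B ∪ A.image φ) ≤ g (B ∪ A) + ∑ a ∈ A, D.δ {a, φ a} := by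
  classical
  intro A
  induction A using Finset.induction_on with
  | empty => intro B; simp
  | insert a A' ha ih =>
    intro B
    rw [Finset.image_insert, Finset.sum_insert ha]
    have E1 : B ∪ insert (φ a) (A'.image φ) = (B ∪ A'.image φ) ∪ {φ a} :=
      union_insert_eq _ _ _
    have h1 := hswap (B ∪ A'.image φ) a (φ a)
    have E2 : (B ∪ A'.image φ) ∪ {a} = (B ∪ {a}) ∪ A'.image φ := union_swap_eq _ _ _
    have h2 := ih (B ∪ {a})
    have E3 : (B ∪ {a}) ∪ A' = B ∪ insert a A' := by
      rw [← union_swap_eq, ← union_insert_eq]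
    rw [E1]
    rw [E2] at h1
    rw [E3] at h2
    linarith

lemma swap_sum_rev (g : Finset X → ℝ)
    (hswap : ∀ (T : Finset X) (x y : X), g (T ∪ {y}) ≤ g (T ∪ {x}) + D.δ {x, y})
    (φ : X → X) :
    ∀ (A B : Finset X), g (B ∪ A) ≤ g (B ∪ A.image φ) + ∑ a ∈ A, D.δ {a, φ a} := by
  classical
  intro A
  induction A using Finset.induction_on with
  | empty => intro B; simp
  | insert a A' ha ih =>
    intro B
    rw [Finset.image_insert, Finset.sum_insert ha]
    have E0 : B ∪ insert a A' = (B ∪ A') ∪ {a} := union_insert_eq _ _ _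
    have h1 := hswap (B ∪ A') (φ a) a
    have E1 : (B ∪ A') ∪ {φ a} = (B ∪ {φ a}) ∪ A' := union_swap_eq _ _ _
    have h2 := ih (B ∪ {φ a})
    have E2 : (B ∪ {φ a}) ∪ A'.image φ = B ∪ insert (φ a) (A'.image φ) := by
      rw [← union_swap_eq, ← union_insert_eq]
    rw [E1] at h1
    rw [E2] at h2
    have h3 : D.δ {φ a, a} = D.δ {a, φ a} := d_pair_comm D _ _
    rw [E0]
    linarith

end Swap

section Approx

variable {S : Set X}

lemma restrict_delta {Y : Type*} (E : Diversity Y) {T : Set Y} (A : Finset T) :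
    (E.restrict T).δ A = E.δ (A.image Subtype.val) := rfl

lemma exists_S (hS : (D.restrict S).ExtensionProp) : ∃ z : X, z ∈ S := by
  classical
  have hadm : IsAdmissible ((D.restrict S).restrict (((∅ : Finset S) : Set S)))
      (fun _ => 0) := by
    have hempty : ∀ A : Finset (((∅ : Finset S) : Set S)), A = ∅ := by
      intro A
      rcases Finset.eq_empty_or_nonempty A with h | h
      · exact h
      · obtain ⟨y, -⟩ := h
        exact absurd y.2 (by simp)
    constructor
    · rfl
    · intro A
      rw [hempty A, restrict_delta]
      simp [restrict_delta, d_empty]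
    · intro A B C hC
      rw [hempty C] at hC
      exact absurd hC (by simp)
    · intro A B; simp
  obtain ⟨x, -⟩ := hS ∅ (fun _ => 0) hadm
  exact ⟨x.1, x.2⟩

lemma approxExt (hdense : ∀ x : X, ∀ ε : ℝ, 0 < ε → ∃ y ∈ S, D.δ {x, y} < ε)
    (hS : (D.restrict S).ExtensionProp) (G : Finset X) (f : Finset X → ℝ)
    (hf : AdmOn D G f) {ε : ℝ} (hε : 0 < ε) :
    ∃ z, z ∈ S ∧ ∀ A, A ⊆ G → |D.δ (insert z A) - f A| ≤ ε := by
  classical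
  rcases Finset.eq_empty_or_nonempty G with rfl | hG
  · obtain ⟨z₀, hz₀⟩ := exists_S hS
    refine ⟨z₀, hz₀, ?_⟩
    intro A hA
    rw [Finset.subset_empty.1 hA]
    have h0 : D.δ (insert z₀ ∅) = 0 := by
      have := d_singleton D z₀
      simpa using this
    rw [h0, hf.empty]
    simpa using le_of_lt hε
  · have hm0 : 0 < G.card := Finset.card_pos.2 hG
    set η := ε / (2 * G.card) with hηdef
    have hη : 0 < η := by
      apply div_pos hε
      positivity
    letI : DecidableEq X := fun a b => Classical.propDecidable _
    letI : DecidableEq S := fun a b => Classical.propDecidable _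
    choose φ hφS hφd using fun x : X => hdense x η hη
    set F' : Finset S := G.attach.image (fun a => (⟨φ a.1, hφS a.1⟩ : S)) with hF'
    have hδ2 : ∀ A : Finset ((F' : Set S)),
        ((D.restrict S).restrict ((F' : Set S))).δ A =
          D.δ ((A.image Subtype.val).image Subtype.val) := by
      intro A
      rw [restrict_delta, restrict_delta]
    have hadm : IsAdmissible ((D.restrict S).restrict ((F' : Set S)))
        (fun A => extD D G f ((A.image Subtype.val).image Subtype.val)) := by
      constructor
      · show extD D G f ((Finset.image _ (Finset.image _ (∅ : Finset _)))) = 0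
        simp only [Finset.image_empty]
        rw [extD_eq hf (Finset.empty_subset G), hf.empty]
      · intro A
        rw [hδ2]
        exact extD_ge hf hG _
      · intro A B C hC
        show extD D G f _ ≤ extD D G f _ + _
        rw [hδ2]
        simp only [Finset.image_union]
        exact extD_tri hf hG _ _ _ ((hC.image _).image _)
      · intro A B
        show extD D G f _ ≤ extD D G f _ + extD D G f _
        simp only [Finset.image_union]
        exact extD_subadd hf hG _ _
    obtain ⟨x, hx⟩ := hS F' _ hadm
    refine ⟨x.1, x.2, ?_⟩
    intro A₀ hA₀
    have hmemF' : ∀ a : X, a ∈ A₀ → (⟨φ a, hφS a⟩ : S) ∈ (F' : Set S) := by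
      intro a ha
      rw [Finset.mem_coe, hF']
      exact Finset.mem_image.2 ⟨⟨a, hA₀ ha⟩, Finset.mem_attach _ _, rfl⟩
    have hval : D.δ (insert x.1 (A₀.image φ)) = extD D G f (A₀.image φ) := by
      have h := hx (A₀.attach.image (fun a => (⟨⟨φ a.1, hφS a.1⟩, hmemF' a.1 a.2⟩ :
        ((F' : Set S)))))
      rw [restrict_delta, Finset.image_insert] at h
      convert h using 2
      · apply Finset.ext
        intro w
        rw [Finset.mem_insert, Finset.mem_insert]
        constructor
        · rintro (rfl | hw)
          · exact Or.inl rfl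
          · right
            obtain ⟨a, ha, rfl⟩ := Finset.mem_image.1 hw
            exact Finset.mem_image.2 ⟨⟨φ a, hφS a⟩,
              Finset.mem_image.2 ⟨⟨⟨φ a, hφS a⟩, hmemF' a ha⟩,
                Finset.mem_image.2 ⟨⟨a, ha⟩, Finset.mem_attach _ _, rfl⟩, rfl⟩, rfl⟩
        · rintro (rfl | hw)
          · exact Or.inl rfl
          · right
            obtain ⟨y, hy, rfl⟩ := Finset.mem_image.1 hw
            obtain ⟨u, hu, rfl⟩ := Finset.mem_image.1 hy
            obtain ⟨b, -, rfl⟩ := Finset.mem_image.1 hu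
            exact Finset.mem_image.2 ⟨b.1, b.2, rfl⟩
      · apply Finset.ext
        intro w
        constructor
        · intro hw
          obtain ⟨a, ha, rfl⟩ := Finset.mem_image.1 hw
          exact Finset.mem_image.2 ⟨⟨φ a, hφS a⟩,
            Finset.mem_image.2 ⟨⟨⟨φ a, hφS a⟩, hmemF' a ha⟩,
              Finset.mem_image.2 ⟨⟨a, ha⟩, Finset.mem_attach _ _, rfl⟩, rfl⟩, rfl⟩
        · intro hw
          obtain ⟨y, hy, rfl⟩ := Finset.mem_image.1 hw
          obtain ⟨u, hu, rfl⟩ := Finset.mem_image.1 hy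
          obtain ⟨b, -, rfl⟩ := Finset.mem_image.1 hu
          exact Finset.mem_image.2 ⟨b.1, b.2, rfl⟩
    -- quantitative bounds
    set s := ∑ a ∈ A₀, D.δ {a, φ a} with hs
    have hs_le : s ≤ ε / 2 := by
      have h1 : s ≤ A₀.card • η :=
        Finset.sum_le_card_nsmul A₀ _ η (fun a _ => le_of_lt (hφd a))
      have h2 : (A₀.card : ℝ) * η ≤ (G.card : ℝ) * η := by
        apply mul_le_mul_of_nonneg_right _ (le_of_lt hη)
        exact_mod_cast Finset.card_le_card hA₀
      have h3 : (G.card : ℝ) * η = ε / 2 := by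
        rw [hηdef]
        field_simp
      rw [nsmul_eq_mul] at h1
      linarith
    have hswapδ : ∀ (T : Finset X) (u v : X), D.δ (T ∪ {v}) ≤ D.δ (T ∪ {u}) + D.δ {u, v} :=
      fun T u v => d_swap D T u v
    have hswapE : ∀ (T : Finset X) (u v : X),
        extD D G f (T ∪ {v}) ≤ extD D G f (T ∪ {u}) + D.δ {u, v} := by
      intro T u v
      have h := extD_tri hf hG T {v} {u} ⟨u, Finset.mem_singleton_self u⟩
      have e : ({v} ∪ {u} : Finset X) = {u, v} := by ext b; simp [or_comm]
      rwa [e] at h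
    have h1 := swap_sum (D.δ) hswapδ φ A₀ {x.1}
    have h2 := swap_sum_rev (D.δ) hswapδ φ A₀ {x.1}
    have h3 := swap_sum (extD D G f) hswapE φ A₀ ∅
    have h4 := swap_sum_rev (extD D G f) hswapE φ A₀ ∅
    rw [Finset.empty_union, Finset.empty_union] at h3 h4
    have e5 : ({x.1} : Finset X) ∪ A₀.image φ = insert x.1 (A₀.image φ) := rfl
    have e6 : ({x.1} : Finset X) ∪ A₀ = insert x.1 A₀ := rfl
    rw [e5, e6] at h1 h2
    have hfA : extD D G f A₀ = f A₀ := extD_eq hf hA₀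
    rw [abs_le]
    constructor
    · have : f A₀ - 2 * s ≤ D.δ (insert x.1 A₀) := by
        rw [← hfA]
        linarith [hval]
      linarith
    · have : D.δ (insert x.1 A₀) ≤ f A₀ + 2 * s := by
        rw [← hfA]
        linarith [hval]
      linarith

end Approx

section Iterate

variable (D)

/-- State of the iterative construction. -/
structure IterState (G₀ : Finset X) (f₀ : Finset X → ℝ) where
  G : Finset X
  f : Finset X → ℝ
  hsub : G₀ ⊆ G
  hadm : AdmOn D G f
  hres : ∀ A, A ⊆ G₀ → f A = f₀ A

variable {D} {S : Set X} {G₀ : Finset X} {f₀ : Finset X → ℝ}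

/-- One step of the iteration: find an approximate realizer and extend the state. -/
noncomputable def iterStep (hdense : ∀ x : X, ∀ ε : ℝ, 0 < ε → ∃ y ∈ S, D.δ {x, y} < ε)
    (hS : (D.restrict S).ExtensionProp) (k : ℕ) (st : IterState D G₀ f₀) :
    IterState D G₀ f₀ × X :=
  let z := (approxExt hdense hS st.G st.f st.hadm
    (ε := (1/2 : ℝ)^k) (by positivity)).choose
  if hz : z ∈ st.G then (st, z)
  else
    (⟨insert z st.G, amalg D st.G st.f z,
      st.hsub.trans (Finset.subset_insert _ _),
      amalg_adm st.hadm,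
      fun A hA => by
        rw [amalg_of_not_mem (fun hzA => hz (st.hsub (hA hzA)))]
        exact st.hres A hA⟩, z)

lemma iterStep_spec (hdense : ∀ x : X, ∀ ε : ℝ, 0 < ε → ∃ y ∈ S, D.δ {x, y} < ε)
    (hS : (D.restrict S).ExtensionProp) (k : ℕ) (st : IterState D G₀ f₀) :
    (∀ A, A ⊆ st.G → |D.δ (insert (iterStep hdense hS k st).2 A) - st.f A| ≤ (1/2 : ℝ)^k)
    ∧ st.G ⊆ (iterStep hdense hS k st).1.G
    ∧ (iterStep hdense hS k st).2 ∈ (iterStep hdense hS k st).1.G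
    ∧ (iterStep hdense hS k st).1.f {(iterStep hdense hS k st).2} ≤ (1/2 : ℝ)^k := by
  classical
  have hε : (0:ℝ) < (1/2 : ℝ)^k := by positivity
  set z := (approxExt hdense hS st.G st.f st.hadm (ε := (1/2 : ℝ)^k) (by positivity)).choose
    with hzdef
  have hspec := (approxExt hdense hS st.G st.f st.hadm
    (ε := (1/2 : ℝ)^k) (by positivity)).choose_spec
  have happ : ∀ A, A ⊆ st.G → |D.δ (insert z A) - st.f A| ≤ (1/2 : ℝ)^k := hspec.2
  by_cases hz : z ∈ st.G
  · have hstep : iterStep hdense hS k st = (st, z) := by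
      rw [iterStep]
      simp only [← hzdef, dif_pos hz]
    rw [hstep]
    refine ⟨happ, Finset.Subset.refl _, hz, ?_⟩
    have h1 := happ {z} (Finset.singleton_subset_iff.2 hz)
    have e : insert z ({z} : Finset X) = {z} := by simp
    rw [e, d_singleton] at h1
    have h2 : (0:ℝ) ≤ st.f {z} := st.hadm.nonneg (Finset.singleton_subset_iff.2 hz)
    rw [abs_sub_comm, abs_of_nonneg (by linarith [abs_nonneg (st.f {z})] : (0:ℝ) ≤ st.f {z} - 0)] at h1
    linarith
  · have hstep : iterStep hdense hS k st = (⟨insert z st.G, amalg D st.G st.f z,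
        st.hsub.trans (Finset.subset_insert _ _), amalg_adm st.hadm,
        fun A hA => by
          rw [amalg_of_not_mem (fun hzA => hz (st.hsub (hA hzA)))]
          exact st.hres A hA⟩, z) := by
      rw [iterStep]
      simp only [← hzdef, dif_neg hz]
    rw [hstep]
    refine ⟨happ, Finset.subset_insert _ _, Finset.mem_insert_self _ _, ?_⟩
    show amalg D st.G st.f z {z} ≤ (1/2 : ℝ)^k
    rw [amalg_of_mem (Finset.mem_singleton_self z), Finset.erase_singleton]
    exact Mf_empty_le st.hadm (le_of_lt hε) happ

/-- The iterated chain of states and approximate realizers. -/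
noncomputable def iterChain (hdense : ∀ x : X, ∀ ε : ℝ, 0 < ε → ∃ y ∈ S, D.δ {x, y} < ε)
    (hS : (D.restrict S).ExtensionProp) (st₀ : IterState D G₀ f₀) :
    ℕ → IterState D G₀ f₀ × X
  | 0 => (st₀, (exists_S hS).choose)
  | (k+1) => iterStep hdense hS k (iterChain hdense hS st₀ k).1

lemma main_aux (hc : D.CompleteD)
    (hdense : ∀ x : X, ∀ ε : ℝ, 0 < ε → ∃ y ∈ S, D.δ {x, y} < ε)
    (hS : (D.restrict S).ExtensionProp) (G₀ : Finset X) (f₀ : Finset X → ℝ)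
    (hf₀ : AdmOn D G₀ f₀) :
    ∃ x : X, ∀ A, A ⊆ G₀ → D.δ (insert x A) = f₀ A := by
  classical
  set st₀ : IterState D G₀ f₀ :=
    ⟨G₀, f₀, Finset.Subset.refl _, hf₀, fun _ _ => rfl⟩ with hst₀
  set C := iterChain hdense hS st₀ with hC
  set u : ℕ → X := fun k => (C (k+1)).2 with hu
  have hCsucc : ∀ k, C (k+1) = iterStep hdense hS k (C k).1 := fun k => rfl
  -- basic facts
  have hAk : ∀ k, ∀ A, A ⊆ (C k).1.G →
      |D.δ (insert (u k) A) - (C k).1.f A| ≤ (1/2 : ℝ)^k := by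
    intro k
    have := (iterStep_spec hdense hS k (C k).1).1
    rw [← hCsucc k] at this
    exact this
  have hGsub : ∀ k, (C k).1.G ⊆ (C (k+1)).1.G := by
    intro k
    have := (iterStep_spec hdense hS k (C k).1).2.1
    rw [← hCsucc k] at this
    exact this
  have humem : ∀ k, u k ∈ (C (k+1)).1.G := by
    intro k
    have := (iterStep_spec hdense hS k (C k).1).2.2.1
    rw [← hCsucc k] at this
    exact this
  have hfu : ∀ k, (C (k+1)).1.f {u k} ≤ (1/2 : ℝ)^k := by
    intro k
    have := (iterStep_spec hdense hS k (C k).1).2.2.2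
    rw [← hCsucc k] at this
    exact this
  -- realization of f₀
  have hreal : ∀ k, ∀ A, A ⊆ G₀ → |D.δ (insert (u k) A) - f₀ A| ≤ (1/2 : ℝ)^k := by
    intro k A hA
    have h1 := hAk k A (hA.trans (C k).1.hsub)
    rw [(C k).1.hres A hA] at h1
    exact h1
  -- consecutive distances
  have hconsec : ∀ k, D.δ {u k, u (k+1)} ≤ (1/2 : ℝ)^k + (1/2 : ℝ)^(k+1) := by
    intro k
    have h1 := hAk (k+1) {u k} (Finset.singleton_subset_iff.2 (humem k))
    have h2 := hfu k
    have h3 : (0:ℝ) ≤ (C (k+1)).1.f {u k} :=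
      (C (k+1)).1.hadm.nonneg (Finset.singleton_subset_iff.2 (humem k))
    have e : insert (u (k+1)) ({u k} : Finset X) = {u k, u (k+1)} := by
      rw [Finset.pair_comm]
    rw [e] at h1
    have := abs_le.1 h1
    linarith [this.2]
  -- telescoping
  have htel : ∀ m n, m ≤ n → D.δ {u m, u n} ≤ 4*(1/2 : ℝ)^m - 4*(1/2 : ℝ)^n := by
    intro m n hmn
    induction n, hmn using Nat.le_induction with
    | base =>
      have e : ({u m, u m} : Finset X) = {u m} := by simp
      rw [e, d_singleton]
      linarith
    | succ n hmn ih =>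
      have h1 := D.triangle {u m} {u n} {u (n+1)} ⟨u n, Finset.mem_singleton_self _⟩
      have e1 : ({u m} ∪ {u (n+1)} : Finset X) = {u m, u (n+1)} := rfl
      have e2 : ({u m} ∪ {u n} : Finset X) = {u m, u n} := rfl
      have e3 : ({u n} ∪ {u (n+1)} : Finset X) = {u n, u (n+1)} := rfl
      rw [e1, e2, e3] at h1
      have h2 := hconsec n
      have e4 : (1/2 : ℝ)^(n+1) = (1/2 : ℝ)^n * (1/2) := pow_succ _ _
      have h5 : (0:ℝ) ≤ (1/2 : ℝ)^n := by positivity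
      linarith
  -- Cauchy
  have hcauchy : ∀ ε : ℝ, 0 < ε → ∃ N : ℕ, ∀ p ≥ N, ∀ q ≥ N, D.δ {u p, u q} < ε := by
    intro ε hε
    obtain ⟨N, hN⟩ := exists_pow_lt_of_lt_one (show (0:ℝ) < ε/4 by linarith)
      (show (1/2 : ℝ) < 1 by norm_num)
    refine ⟨N, ?_⟩
    intro p hp q hq
    have key : ∀ a b : ℕ, N ≤ a → a ≤ b → D.δ {u a, u b} < ε := by
      intro a b hNa hab
      have h1 := htel a b hab
      have h2 : ((1:ℝ)/2)^a ≤ (1/2 : ℝ)^N :=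
        pow_le_pow_of_le_one (by norm_num) (by norm_num) hNa
      have h3 : (0:ℝ) ≤ (1/2 : ℝ)^b := by positivity
      calc D.δ {u a, u b} ≤ 4*(1/2 : ℝ)^a - 4*(1/2 : ℝ)^b := h1
        _ ≤ 4*(1/2 : ℝ)^N := by linarith
        _ < ε := by linarith
    rcases le_total p q with h | h
    · exact key p q hp h
    · rw [Finset.pair_comm]
      exact key q p hq h
  obtain ⟨x, hx⟩ := hc u hcauchy
  refine ⟨x, ?_⟩
  intro A hA
  -- show the realized value is exact
  have key : ∀ ε : ℝ, 0 < ε → |D.δ (insert x A) - f₀ A| ≤ ε := by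
    intro ε hε
    obtain ⟨k₁, hk₁⟩ := exists_pow_lt_of_lt_one (show (0:ℝ) < ε/2 by linarith)
      (show (1/2 : ℝ) < 1 by norm_num)
    obtain ⟨N, hN⟩ := hx (ε/2) (by linarith)
    set k := max k₁ N with hk
    have hb : (1/2 : ℝ)^k ≤ (1/2 : ℝ)^k₁ :=
      pow_le_pow_of_le_one (by norm_num) (by norm_num) (le_max_left _ _)
    have hdx : D.δ {u k, x} < ε/2 := hN k (le_max_right _ _)
    have hrk := hreal k A hA
    -- swap u k and x
    have hs1 : D.δ (insert x A) ≤ D.δ (insert (u k) A) + D.δ {u k, x} := by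
      have := d_swap D A (u k) x
      have e1 : A ∪ {x} = insert x A := by ext a; simp [or_comm]
      have e2 : A ∪ {u k} = insert (u k) A := by ext a; simp [or_comm]
      rwa [e1, e2] at this
    have hs2 : D.δ (insert (u k) A) ≤ D.δ (insert x A) + D.δ {u k, x} := by
      have := d_swap D A x (u k)
      have e1 : A ∪ {x} = insert x A := by ext a; simp [or_comm]
      have e2 : A ∪ {u k} = insert (u k) A := by ext a; simp [or_comm]
      have e3 : D.δ {x, u k} = D.δ {u k, x} := d_pair_comm D _ _
      rwa [e1, e2, e3] at this
    have habs := abs_le.1 hrk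
    rw [abs_le]
    constructor
    · have : (1/2:ℝ)^k < ε/2 := lt_of_le_of_lt hb hk₁
      linarith [habs.1]
    · have : (1/2:ℝ)^k < ε/2 := lt_of_le_of_lt hb hk₁
      linarith [habs.2]
  have h0 : |D.δ (insert x A) - f₀ A| ≤ 0 := by
    by_contra h
    push_neg at h
    have := key (|D.δ (insert x A) - f₀ A| / 2) (by linarith)
    linarith
  have := abs_nonneg (D.δ (insert x A) - f₀ A)
  have heq : |D.δ (insert x A) - f₀ A| = 0 := le_antisymm h0 this
  have := abs_eq_zero.1 heq
  linarith [this]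

end Iterate

end DivAux

open DivAux in
/-- If a complete diversity has a dense subset whose restricted diversity has the
extension property, then the whole diversity has the extension property. -/
theorem stmt13 {X : Type*} (D : Diversity X) (hc : D.CompleteD) (S : Set X)
    (hdense : ∀ x : X, ∀ ε : ℝ, 0 < ε → ∃ y ∈ S, D.δ {x, y} < ε)
    (hS : (D.restrict S).ExtensionProp) :
    D.ExtensionProp := by
  classical
  intro F f hf
  letI : DecidableEq X := fun a b => Classical.propDecidable _
  letI : DecidableEq ((F : Set X)) := fun a b => Classical.propDecidable _
  set p : X → Prop := fun x => x ∈ (F : Set X) with hp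
  have hpF : ∀ {a : X}, a ∈ F → p a := by
    intro a ha
    show a ∈ (F : Set X)
    exact Finset.mem_coe.2 ha
  set ft : Finset X → ℝ := fun W => f (W.subtype p) with hft
  have sub_img : ∀ W : Finset X, W ⊆ F → (W.subtype p).image Subtype.val = W := by
    intro W hW
    ext a
    constructor
    · intro ha
      obtain ⟨b, hb, rfl⟩ := Finset.mem_image.1 ha
      exact Finset.mem_subtype.1 hb
    · intro ha
      exact Finset.mem_image.2 ⟨⟨a, hpF (hW ha)⟩, Finset.mem_subtype.2 ha, rfl⟩
  have sub_union : ∀ A B : Finset X, (A ∪ B).subtype p = A.subtype p ∪ B.subtype p := by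
    intro A B
    ext u
    simp [Finset.mem_subtype]
  have sub_ne : ∀ C : Finset X, C ⊆ F → C.Nonempty → (C.subtype p).Nonempty := by
    intro C hC ⟨c, hc⟩
    exact ⟨⟨c, hpF (hC hc)⟩, Finset.mem_subtype.2 hc⟩
  have hadm : AdmOn D F ft := by
    constructor
    · show f (Finset.subtype p ∅) = 0
      have e : Finset.subtype p ∅ = ∅ := rfl
      rw [e, hf.empty]
    · intro A hA
      have h := hf.le (A.subtype p)
      rw [restrict_delta, sub_img A hA] at h
      exact h
    · intro A hA B hB C hC hCne
      have h := hf.tri (A.subtype p) (B.subtype p) (C.subtype p) (sub_ne C hC hCne)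
      rw [restrict_delta, ← sub_union, ← sub_union, ← sub_union] at h
      rw [sub_img (B ∪ C) (Finset.union_subset hB hC)] at h
      exact h
    · intro A hA B hB
      have h := hf.subadd (A.subtype p) (B.subtype p)
      rw [← sub_union] at h
      exact h
  obtain ⟨x, hx⟩ := main_aux hc hdense hS F ft hadm
  refine ⟨x, ?_⟩
  intro A
  have hW : A.image Subtype.val ⊆ F := by
    intro a ha
    obtain ⟨b, hb, rfl⟩ := Finset.mem_image.1 ha
    exact Finset.mem_coe.1 b.2
  have h := hx (A.image Subtype.val) hW
  rw [h]
  show f ((A.image Subtype.val).subtype p) = f A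
  congr 1
  ext u
  rw [Finset.mem_subtype]
  constructor
  · intro hu
    obtain ⟨b, hb, hval⟩ := Finset.mem_image.1 hu
    have : b = u := Subtype.ext hval
    exact this ▸ hb
  · intro hu
    exact Finset.mem_image.2 ⟨u, hu, rfl⟩
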